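/- Let s, m ∈ ℕ with m ≥ 4s+1, let V_1,...,V_m be closed bounded intervals of ℝ, and let c_j, d_j ∈ V_j for each j. Then there is a constant M > 0 depending only on s and m such that ∫_{V_1×⋯×V_m} [∑_{t=1}^m (u_t - c_t)^{2s}(u_t - d_t)^{2s}]^{-1} du_1⋯du_m ≤ M·(max{λ(V_1),...,λ(V_m)})^{m-4s}. -/

import Mathlib

open MeasureTheory

lemma aux_min_pow_le (s : ℕ) (x y : ℝ) :
    (min |x| |y|) ^ (4 * s) ≤ x ^ (2 * s) * y ^ (2 * s) := by
  have hx : |x| ^ (2 * s) = x ^ (2 * s) := by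
    rw [← abs_pow]; exact abs_of_nonneg (Even.pow_nonneg (even_two_mul s) x)
  have hy : |y| ^ (2 * s) = y ^ (2 * s) := by
    rw [← abs_pow]; exact abs_of_nonneg (Even.pow_nonneg (even_two_mul s) y)
  have hmin : 0 ≤ min |x| |y| := le_min (abs_nonneg x) (abs_nonneg y)
  calc (min |x| |y|) ^ (4 * s) = ((min |x| |y|) ^ 2) ^ (2 * s) := by
        rw [← pow_mul]; ring_nf
    _ ≤ (|x| * |y|) ^ (2 * s) := by
        apply pow_le_pow_left₀ (by positivity)
        rw [pow_two]
        exact mul_le_mul (min_le_left _ _) (min_le_right _ _) hmin (abs_nonneg x)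
    _ = |x| ^ (2 * s) * |y| ^ (2 * s) := mul_pow _ _ _
    _ = x ^ (2 * s) * y ^ (2 * s) := by rw [hx, hy]

/-- Lemma 2.3: if `m ≥ 4s+1` there is `M > 0`, depending on `s` and `m` only, such that for
all closed bounded intervals `V_j = [a_j, b_j]` and points `c_j, d_j ∈ V_j`,
`∫_{V_1 × ⋯ × V_m} (∑_t (u_t-c_t)^{2s}(u_t-d_t)^{2s})⁻¹ du ≤ M (max_j λ(V_j))^{m-4s}`. -/
theorem integral_inv_sum_le (s m : ℕ) (hm : 4 * s + 1 ≤ m) :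
    ∃ M > (0 : ℝ), ∀ a b c d : Fin m → ℝ, (∀ j, a j ≤ b j) →
      (∀ j, c j ∈ Set.Icc (a j) (b j)) → (∀ j, d j ∈ Set.Icc (a j) (b j)) →
      ∫⁻ u : Fin m → ℝ in Set.univ.pi fun j => Set.Icc (a j) (b j),
          (ENNReal.ofReal (∑ t, (u t - c t) ^ (2 * s) * (u t - d t) ^ (2 * s)))⁻¹
        ≤ ENNReal.ofReal (M * (⨆ j, (b j - a j)) ^ (m - 4 * s)) := by
  have hm0 : 0 < m := lt_of_lt_of_le (Nat.succ_pos _) hm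
  rcases Nat.eq_zero_or_pos s with hs0 | hs1
  · -- case s = 0
    subst hs0
    refine ⟨1, one_pos, fun a b c d hab hc hd => ?_⟩
    have hbdd : BddAbove (Set.range fun j => b j - a j) := Finite.bddAbove_range _
    have hbaL : ∀ j, b j - a j ≤ ⨆ j, (b j - a j) := fun j => le_ciSup hbdd j
    have hL0 : 0 ≤ ⨆ j, (b j - a j) :=
      le_trans (sub_nonneg.2 (hab ⟨0, hm0⟩)) (hbaL ⟨0, hm0⟩)
    have hconst : ∀ u : Fin m → ℝ,
        (∑ t : Fin m, (u t - c t) ^ (2 * 0) * (u t - d t) ^ (2 * 0)) = (m : ℝ) := by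
      intro u; simp
    simp_rw [hconst]
    calc ∫⁻ _u : Fin m → ℝ in Set.univ.pi fun j => Set.Icc (a j) (b j),
          (ENNReal.ofReal (m : ℝ))⁻¹
        = (ENNReal.ofReal (m : ℝ))⁻¹
            * volume (Set.univ.pi fun j => Set.Icc (a j) (b j)) := setLIntegral_const _ _
      _ ≤ 1 * volume (Set.univ.pi fun j => Set.Icc (a j) (b j)) := by
          refine mul_le_mul_left (ENNReal.inv_le_one.2 ?_) _
          exact ENNReal.one_le_ofReal.2 (by exact_mod_cast hm0)
      _ = volume (Set.univ.pi fun j => Set.Icc (a j) (b j)) := one_mul _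
      _ = ∏ j, ENNReal.ofReal (b j - a j) := by
          rw [volume_pi_pi]; simp [Real.volume_Icc]
      _ ≤ ∏ _j : Fin m, ENNReal.ofReal (⨆ j, (b j - a j)) :=
          Finset.prod_le_prod' fun j _ => ENNReal.ofReal_le_ofReal (hbaL j)
      _ = ENNReal.ofReal (⨆ j, (b j - a j)) ^ m := by
          rw [Finset.prod_const, Finset.card_univ, Fintype.card_fin]
      _ = ENNReal.ofReal ((⨆ j, (b j - a j)) ^ m) := (ENNReal.ofReal_pow hL0 m).symm
      _ ≤ ENNReal.ofReal (1 * (⨆ j, (b j - a j)) ^ (m - 4 * 0)) := by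
          apply le_of_eq; norm_num
  · -- case s ≥ 1
    obtain ⟨q, hq⟩ : ∃ q, 4 * s = q + 1 := ⟨4 * s - 1, by omega⟩
    obtain ⟨p, hp⟩ : ∃ p, m = 4 * s + 1 + p := ⟨m - (4 * s + 1), by omega⟩
    set M : ℝ := 2 * ((m : ℝ) ^ q * 2 ^ (q + 1) * 4 ^ (q + 2) * m) with hM
    have hMpos : 0 < M := by positivity
    refine ⟨M, hMpos, fun a b c d hab hc hd => ?_⟩
    set L : ℝ := ⨆ j, (b j - a j) with hLdef
    have hbdd : BddAbove (Set.range fun j => b j - a j) := Finite.bddAbove_range _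
    have hbaL : ∀ j, b j - a j ≤ L := fun j => le_ciSup hbdd j
    have hL0 : 0 ≤ L := le_trans (sub_nonneg.2 (hab ⟨0, hm0⟩)) (hbaL ⟨0, hm0⟩)
    set box : Set (Fin m → ℝ) := Set.univ.pi fun j => Set.Icc (a j) (b j) with hbox
    by_cases hL : L = 0
    · -- degenerate box
      have hba : ∀ j, b j - a j = 0 := fun j =>
        le_antisymm (hL ▸ hbaL j) (sub_nonneg.2 (hab j))
      have hboxz : volume box = 0 := by
        rw [hbox, volume_pi_pi]
        refine Finset.prod_eq_zero (Finset.mem_univ (⟨0, hm0⟩ : Fin m)) ?_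
        rw [Real.volume_Icc, hba, ENNReal.ofReal_zero]
      rw [setLIntegral_measure_zero _ _ hboxz]
      exact zero_le
    · have hLpos : 0 < L := lt_of_le_of_ne hL0 (Ne.symm hL)
      set Y : (Fin m → ℝ) → ℝ := fun u => ∑ t, min |u t - c t| |u t - d t| with hY
      have hterm_nonneg : ∀ (u : Fin m → ℝ) (t : Fin m),
          0 ≤ min |u t - c t| |u t - d t| :=
        fun u t => le_min (abs_nonneg _) (abs_nonneg _)
      have hYnonneg : ∀ u, 0 ≤ Y u := fun u => Finset.sum_nonneg fun t _ => hterm_nonneg u t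
      have hmLpos : 0 < (m : ℝ) * L := by positivity
      -- each term is at most L on the box
      have hterm_le : ∀ u ∈ box, ∀ t, min |u t - c t| |u t - d t| ≤ L := by
        intro u hu t
        have h1 : u t ∈ Set.Icc (a t) (b t) := hu t (Set.mem_univ t)
        have h2 := hc t
        refine le_trans (min_le_left _ _) (le_trans ?_ (hbaL t))
        rw [abs_le]
        constructor <;> [linarith [h1.1, h2.2]; linarith [h1.2, h2.1]]
      have hYle : ∀ u ∈ box, Y u ≤ m * L := by
        intro u hu
        calc Y u ≤ ∑ _t : Fin m, L := Finset.sum_le_sum fun t _ => hterm_le u hu t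
          _ = m * L := by
            rw [Finset.sum_const, Finset.card_univ, Fintype.card_fin, nsmul_eq_mul]
      -- pointwise bound for the integrand
      have key1 : ∀ u : Fin m → ℝ,
          (ENNReal.ofReal (∑ t, (u t - c t) ^ (2 * s) * (u t - d t) ^ (2 * s)))⁻¹
            ≤ (ENNReal.ofReal (Y u ^ (4 * s) / (m : ℝ) ^ q))⁻¹ := by
        intro u
        apply ENNReal.inv_le_inv'
        apply ENNReal.ofReal_le_ofReal
        have h1 : Y u ^ (4 * s) / (m : ℝ) ^ q
            ≤ ∑ t, (min |u t - c t| |u t - d t|) ^ (4 * s) := by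
          have := pow_sum_div_card_le_sum_pow (s := Finset.univ)
            (f := fun t : Fin m => min |u t - c t| |u t - d t|)
            (fun i _ => hterm_nonneg u i) q
          rw [Finset.card_univ, Fintype.card_fin] at this
          rw [hq]
          simpa using this
        refine le_trans h1 (Finset.sum_le_sum fun t _ => aux_min_pow_le s _ _)
      -- the zero set
      set N : Set (Fin m → ℝ) := {u | Y u ≤ 0} with hN
      have hNzero : volume N = 0 := by
        have hsub : N ⊆ Set.univ.pi fun t => ({c t, d t} : Set ℝ) := by
          intro u hu t _
          have h1 : min |u t - c t| |u t - d t| = 0 :=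
            le_antisymm (le_trans (Finset.single_le_sum
              (fun i (_ : i ∈ Finset.univ) => hterm_nonneg u i) (Finset.mem_univ t)) hu)
              (hterm_nonneg u t)
          rcases min_cases |u t - c t| |u t - d t| with ⟨h2, _⟩ | ⟨h2, _⟩
          · left; have := h2 ▸ h1; have := abs_eq_zero.1 this; linarith
          · right; have := h2 ▸ h1; have := abs_eq_zero.1 this;
            show u t = d t; linarith
        refine measure_mono_null hsub ?_
        rw [volume_pi_pi]
        refine Finset.prod_eq_zero (Finset.mem_univ (⟨0, hm0⟩ : Fin m)) ?_
        exact (Set.toFinite _).measure_zero _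
      -- the annuli
      set B : ℕ → Set (Fin m → ℝ) := fun k =>
        box ∩ {u | (m : ℝ) * L / 2 ^ (k + 1) < Y u ∧ Y u ≤ (m : ℝ) * L / 2 ^ k} with hB
      have hcover : box ⊆ N ∪ ⋃ k, B k := by
        intro u hu
        by_cases hY0 : Y u ≤ 0
        · exact Or.inl hY0
        push_neg at hY0
        have hex : ∃ n : ℕ, (m : ℝ) * L / 2 ^ (n + 1) < Y u := by
          obtain ⟨n, hn⟩ := exists_pow_lt_of_lt_one (div_pos hY0 hmLpos)
            (by norm_num : (1 : ℝ) / 2 < 1)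
          refine ⟨n, ?_⟩
          have h1 : (1 / 2 : ℝ) ^ n * ((m : ℝ) * L) < Y u := (lt_div_iff₀ hmLpos).1 hn
          have h2 : (2 : ℝ) ^ n * ((1 / 2 : ℝ) ^ n) = 1 := by
            rw [← mul_pow]; norm_num
          have h3 : (0 : ℝ) < 2 ^ n := by positivity
          have h4 : (m : ℝ) * L < 2 ^ n * Y u := by
            calc (m : ℝ) * L = 2 ^ n * ((1 / 2 : ℝ) ^ n * ((m : ℝ) * L)) := by
                  rw [← mul_assoc, h2, one_mul]
              _ < 2 ^ n * Y u := by exact mul_lt_mul_of_pos_left h1 h3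
          rw [div_lt_iff₀ (by positivity), pow_succ]
          nlinarith [hY0, h3]
        refine Or.inr (Set.mem_iUnion.2 ⟨Nat.find hex, hu, Nat.find_spec hex, ?_⟩)
        rcases Nat.eq_zero_or_pos (Nat.find hex) with h0 | hposk
        · rw [h0]; simpa using hYle u hu
        · have hmin := Nat.find_min hex (Nat.sub_lt hposk one_pos)
          push_neg at hmin
          have heq : Nat.find hex - 1 + 1 = Nat.find hex := by omega
          rwa [heq] at hmin
      -- measure bound for the annuli
      have hBk : ∀ k, volume (B k)
          ≤ (min (ENNReal.ofReal L) (ENNReal.ofReal (4 * ((m : ℝ) * L / 2 ^ k)))) ^ m := by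
        intro k
        set r : ℝ := (m : ℝ) * L / 2 ^ k with hr
        have hr0 : 0 ≤ r := by positivity
        have hsub : B k ⊆ Set.univ.pi fun t =>
            Set.Icc (a t) (b t) ∩ (Set.Icc (c t - r) (c t + r) ∪ Set.Icc (d t - r) (d t + r)) := by
          rintro u ⟨hu, _, hY2⟩ t _
          refine ⟨hu t (Set.mem_univ t), ?_⟩
          have hmin2 : min |u t - c t| |u t - d t| ≤ r :=
            le_trans (Finset.single_le_sum (fun i (_ : i ∈ Finset.univ) => hterm_nonneg u i)
              (Finset.mem_univ t)) hY2
          rcases min_le_iff.1 hmin2 with h | h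
          · rcases abs_le.1 h with ⟨h1, h2⟩
            exact Or.inl ⟨by linarith, by linarith⟩
          · rcases abs_le.1 h with ⟨h1, h2⟩
            exact Or.inr ⟨by linarith, by linarith⟩
        calc volume (B k) ≤ volume (Set.univ.pi fun t =>
              Set.Icc (a t) (b t) ∩ (Set.Icc (c t - r) (c t + r) ∪ Set.Icc (d t - r) (d t + r))) :=
            measure_mono hsub
          _ = ∏ t, volume (Set.Icc (a t) (b t)
              ∩ (Set.Icc (c t - r) (c t + r) ∪ Set.Icc (d t - r) (d t + r))) := volume_pi_pi _
          _ ≤ ∏ _t : Fin m, min (ENNReal.ofReal L) (ENNReal.ofReal (4 * r)) := by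
              refine Finset.prod_le_prod' fun t _ => le_min ?_ ?_
              · refine le_trans (measure_mono Set.inter_subset_left) ?_
                rw [Real.volume_Icc]
                exact ENNReal.ofReal_le_ofReal (hbaL t)
              · refine le_trans (measure_mono Set.inter_subset_right) ?_
                refine le_trans (measure_union_le _ _) ?_
                rw [Real.volume_Icc, Real.volume_Icc,
                  ← ENNReal.ofReal_add (by linarith) (by linarith)]
                apply ENNReal.ofReal_le_ofReal; linarith
          _ = _ := by rw [Finset.prod_const, Finset.card_univ, Fintype.card_fin]
      -- constant bound for the integrand on each annulus
      have hfB : ∀ k, ∀ u ∈ B k,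
          (ENNReal.ofReal (∑ t, (u t - c t) ^ (2 * s) * (u t - d t) ^ (2 * s)))⁻¹
            ≤ (ENNReal.ofReal (((m : ℝ) * L / 2 ^ (k + 1)) ^ (4 * s) / (m : ℝ) ^ q))⁻¹ := by
        intro k u hu
        refine le_trans (key1 u) (ENNReal.inv_le_inv' (ENNReal.ofReal_le_ofReal ?_))
        apply div_le_div_of_nonneg_right ?_ (by positivity)
        exact pow_le_pow_left₀ (by positivity) (le_of_lt hu.2.1) _
      set coeff : ℝ := (m : ℝ) ^ q * 2 ^ (q + 1) * 4 ^ (q + 2) * m * L ^ (m - 4 * s)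
        with hcoeff
      have hcoeff0 : 0 ≤ coeff := by positivity
      have hstep : ∀ k, (∫⁻ u in B k,
          (ENNReal.ofReal (∑ t, (u t - c t) ^ (2 * s) * (u t - d t) ^ (2 * s)))⁻¹)
          ≤ ENNReal.ofReal (coeff * (2⁻¹ : ℝ) ^ k) := by
        intro k
        have hθpos : 0 < (m : ℝ) * L / 2 ^ (k + 1) := by positivity
        have hgpos : 0 < ((m : ℝ) * L / 2 ^ (k + 1)) ^ (4 * s) / (m : ℝ) ^ q := by positivity
        have hr0 : (0:ℝ) ≤ 4 * ((m : ℝ) * L / 2 ^ k) := by positivity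
        have hmm : m = p + (q + 2) := by omega
        calc (∫⁻ u in B k,
              (ENNReal.ofReal (∑ t, (u t - c t) ^ (2 * s) * (u t - d t) ^ (2 * s)))⁻¹)
            ≤ ∫⁻ _u in B k,
              (ENNReal.ofReal (((m : ℝ) * L / 2 ^ (k + 1)) ^ (4 * s) / (m : ℝ) ^ q))⁻¹ :=
              setLIntegral_mono measurable_const (hfB k)
          _ = (ENNReal.ofReal (((m : ℝ) * L / 2 ^ (k + 1)) ^ (4 * s) / (m : ℝ) ^ q))⁻¹
              * volume (B k) := setLIntegral_const _ _
          _ ≤ (ENNReal.ofReal (((m : ℝ) * L / 2 ^ (k + 1)) ^ (4 * s) / (m : ℝ) ^ q))⁻¹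
              * (min (ENNReal.ofReal L) (ENNReal.ofReal (4 * ((m : ℝ) * L / 2 ^ k)))) ^ m :=
              mul_le_mul_right (hBk k) _
          _ ≤ (ENNReal.ofReal (((m : ℝ) * L / 2 ^ (k + 1)) ^ (4 * s) / (m : ℝ) ^ q))⁻¹
              * ((ENNReal.ofReal L) ^ p * (ENNReal.ofReal (4 * ((m : ℝ) * L / 2 ^ k))) ^ (q + 2)) := by
              refine mul_le_mul_right ?_ _
              rw [hmm, pow_add]
              exact mul_le_mul' (pow_le_pow_left' (min_le_left _ _) p)
                (pow_le_pow_left' (min_le_right _ _) (q + 2))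
          _ = ENNReal.ofReal ((((m : ℝ) * L / 2 ^ (k + 1)) ^ (4 * s) / (m : ℝ) ^ q)⁻¹
              * (L ^ p * (4 * ((m : ℝ) * L / 2 ^ k)) ^ (q + 2))) := by
              rw [← ENNReal.ofReal_inv_of_pos hgpos, ← ENNReal.ofReal_pow hL0,
                ← ENNReal.ofReal_pow hr0, ← ENNReal.ofReal_mul (by positivity),
                ← ENNReal.ofReal_mul (by positivity)]
          _ ≤ ENNReal.ofReal (coeff * (2⁻¹ : ℝ) ^ k) := by
              apply ENNReal.ofReal_le_ofReal
              apply le_of_eq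
              have hm2 : (m : ℝ) ≠ 0 := Nat.cast_ne_zero.2 hm0.ne'
              have h2k : (2:ℝ) ^ k ≠ 0 := by positivity
              have hps : m - 4 * s = p + 1 := by omega
              rw [hcoeff, hps, hq]
              rw [inv_pow, pow_succ (2:ℝ) k]
              generalize (2:ℝ) ^ k = x at h2k ⊢
              simp only [div_eq_mul_inv, mul_pow, inv_pow, mul_inv, inv_inv, pow_succ]
              field_simp
      calc (∫⁻ u in box,
            (ENNReal.ofReal (∑ t, (u t - c t) ^ (2 * s) * (u t - d t) ^ (2 * s)))⁻¹)
          ≤ ∫⁻ u in N ∪ ⋃ k, B k,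
            (ENNReal.ofReal (∑ t, (u t - c t) ^ (2 * s) * (u t - d t) ^ (2 * s)))⁻¹ :=
            lintegral_mono_set hcover
        _ ≤ (∫⁻ u in N,
              (ENNReal.ofReal (∑ t, (u t - c t) ^ (2 * s) * (u t - d t) ^ (2 * s)))⁻¹)
            + ∫⁻ u in ⋃ k, B k,
              (ENNReal.ofReal (∑ t, (u t - c t) ^ (2 * s) * (u t - d t) ^ (2 * s)))⁻¹ :=
            lintegral_union_le _ _ _
        _ = ∫⁻ u in ⋃ k, B k,
              (ENNReal.ofReal (∑ t, (u t - c t) ^ (2 * s) * (u t - d t) ^ (2 * s)))⁻¹ := by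
            rw [setLIntegral_measure_zero _ _ hNzero, zero_add]
        _ ≤ ∑' k, ∫⁻ u in B k,
              (ENNReal.ofReal (∑ t, (u t - c t) ^ (2 * s) * (u t - d t) ^ (2 * s)))⁻¹ :=
            lintegral_iUnion_le _ _
        _ ≤ ∑' k, ENNReal.ofReal (coeff * (2⁻¹ : ℝ) ^ k) := ENNReal.tsum_le_tsum hstep
        _ = ENNReal.ofReal coeff * ∑' k : ℕ, (ENNReal.ofReal (2⁻¹ : ℝ)) ^ k := by
            simp_rw [ENNReal.ofReal_mul hcoeff0,
              ENNReal.ofReal_pow (by norm_num : (0:ℝ) ≤ 2⁻¹)]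
            rw [ENNReal.tsum_mul_left]
        _ = ENNReal.ofReal coeff * 2 := by
            have h1 : ENNReal.ofReal (2⁻¹ : ℝ) = (2 : ENNReal)⁻¹ := by
              rw [ENNReal.ofReal_inv_of_pos (by norm_num), ENNReal.ofReal_ofNat]
            rw [h1, ENNReal.tsum_geometric, ENNReal.one_sub_inv_two, inv_inv]
        _ ≤ ENNReal.ofReal (M * L ^ (m - 4 * s)) := by
            rw [mul_comm, show (2 : ENNReal) = ENNReal.ofReal (2:ℝ) by
                rw [ENNReal.ofReal_ofNat],
              ← ENNReal.ofReal_mul (by norm_num)]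
            apply ENNReal.ofReal_le_ofReal
            apply le_of_eq
            rw [hM, hcoeff]; ring
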